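/- There is a Kurepa tree if and only if there is a Kurepa family. -/

import Mathlib

/-- The canonical set of ordinals below `ω₁`, as a type. -/
abbrev Omega1 : Type := ((Cardinal.aleph 1).ord).ToType

/-- A Kurepa family: a family of at least `ℵ₂` subsets of `ω₁` such that for every
`α < ω₁` the family of traces on `α` is countable. -/
def IsKurepaFamily (F : Set (Set Omega1)) : Prop :=
  Cardinal.aleph 2 ≤ Cardinal.mk F ∧
  ∀ α : Omega1, {s : Set Omega1 | ∃ A ∈ F, s = A ∩ {x | x < α}}.Countable

/-- `(T, lt)` is a Kurepa tree: a tree (strict order whose sets of predecessors are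
well-ordered) of height `ω₁`, with all levels countable, and with at least `ℵ₂`
uncountable branches (maximal chains).  The height of a node is its well-founded rank,
which for trees agrees with the order type of its set of predecessors. -/
def IsKurepaTree (T : Type) (lt : T → T → Prop) : Prop :=
  (∀ a b c : T, lt a b → lt b c → lt a c) ∧
  (∀ a : T, ¬ lt a a) ∧
  (∀ x : T, IsChain lt {y | lt y x}) ∧
  ∃ hwf : WellFounded lt,
    (∀ x : T, (hwf.apply x).rank < (Cardinal.aleph 1).ord) ∧
    (∀ α : Ordinal, α < (Cardinal.aleph 1).ord → ∃ x : T, (hwf.apply x).rank = α) ∧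
    (∀ α : Ordinal, {x : T | (hwf.apply x).rank = α}.Countable) ∧
    Cardinal.aleph 2 ≤ Cardinal.mk {B : Set T | IsMaxChain lt B ∧ ¬ B.Countable}

set_option linter.deprecated false

open Cardinal Ordinal Set

namespace KurepaAux

noncomputable section

lemma lt_aleph_one_iff {c : Cardinal} : c < Cardinal.aleph 1 ↔ c ≤ Cardinal.aleph0 := by
  rw [show (1 : Ordinal) = Order.succ 0 from (Ordinal.succ_zero).symm, Cardinal.aleph_succ,
    Cardinal.aleph_zero, Order.lt_succ_iff]

lemma code_inj {r r' : Ordinal} {m m' : ℕ} (h : Ordinal.omega0 * r + m = Ordinal.omega0 * r' + m') :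
    r = r' ∧ m = m' := by
  have key : ∀ {a b : Ordinal} {n k : ℕ}, a < b →
      Ordinal.omega0 * a + n ≠ Ordinal.omega0 * b + k := by
    intro a b n k hab
    apply ne_of_lt
    calc Ordinal.omega0 * a + n < Ordinal.omega0 * a + Ordinal.omega0 :=
          add_lt_add_right (Ordinal.nat_lt_omega0 n) _
    _ = Ordinal.omega0 * (a + 1) := by rw [Ordinal.add_one_eq_succ, Ordinal.mul_succ]
    _ ≤ Ordinal.omega0 * b := mul_le_mul_right (Order.succ_le_of_lt hab) _
    _ ≤ Ordinal.omega0 * b + k := le_add_right le_rfl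
  rcases lt_trichotomy r r' with hc | hc | hc
  · exact absurd h (key hc)
  · subst hc
    refine ⟨rfl, ?_⟩
    have := add_left_cancel h
    exact_mod_cast this
  · exact absurd h.symm (key hc)

lemma code_lt {r : Ordinal} (hr : r < (Cardinal.aleph 1).ord) (n : ℕ) :
    Ordinal.omega0 * r + n < (Cardinal.aleph 1).ord := by
  rw [Cardinal.lt_ord, Ordinal.card_add, Ordinal.card_mul, Ordinal.card_omega0, Ordinal.card_nat]
  have hr' : r.card ≤ Cardinal.aleph0 := lt_aleph_one_iff.1 (Cardinal.lt_ord.1 hr)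
  calc Cardinal.aleph0 * r.card + n ≤ Cardinal.aleph0 * Cardinal.aleph0 + Cardinal.aleph0 := by
        gcongr
        exact (Cardinal.nat_lt_aleph0 n).le
  _ = Cardinal.aleph0 := by simp
  _ < Cardinal.aleph 1 := Cardinal.aleph0_lt_aleph_one

/-- The canonical isomorphism between `Iio ω₁` and `Omega1`. -/
def iso : Set.Iio (Cardinal.aleph 1).ord ≃o Omega1 := Ordinal.ToType.mk

/-- The ordinal corresponding to an element of `Omega1`. -/
def ell (β : Omega1) : Ordinal := ((iso.symm β : Set.Iio (Cardinal.aleph 1).ord) : Ordinal)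

lemma ell_lt (β : Omega1) : ell β < (Cardinal.aleph 1).ord := (iso.symm β).2

lemma ell_lt_ell {β γ : Omega1} : ell β < ell γ ↔ β < γ :=
  Subtype.coe_lt_coe.trans iso.symm.lt_iff_lt

lemma ell_inj : Function.Injective ell := fun _ _ h => iso.symm.injective (Subtype.ext h)

lemma ell_surj {o : Ordinal} (ho : o < (Cardinal.aleph 1).ord) : ∃ β, ell β = o :=
  ⟨iso ⟨o, ho⟩, by simp [ell]⟩

lemma mk_Omega1 : Cardinal.mk Omega1 = Cardinal.aleph 1 := by
  rw [Cardinal.mk_toType, Cardinal.card_ord]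

section Tree

variable {T : Type} {lt : T → T → Prop}

lemma rank_surj_below (htrans : ∀ a b c : T, lt a b → lt b c → lt a c) (hwf : WellFounded lt) :
    ∀ y : T, ∀ γ, γ < (hwf.apply y).rank → ∃ z, lt z y ∧ (hwf.apply z).rank = γ := by
  intro y
  induction y using hwf.induction with
  | _ y IH =>
    intro γ hγ
    rw [(hwf.apply y).rank_eq, Ordinal.lt_iSup_iff] at hγ
    obtain ⟨⟨b, hb⟩, hγ⟩ := hγ
    rw [Order.lt_succ_iff] at hγ
    rcases hγ.eq_or_lt with h | h
    · exact ⟨b, hb, h.symm⟩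
    · obtain ⟨z, hz, hz2⟩ := IH b hb γ h
      exact ⟨z, htrans _ _ _ hz hb, hz2⟩

lemma pred_mem_maxchain (htrans : ∀ a b c : T, lt a b → lt b c → lt a c)
    (hchain : ∀ x : T, IsChain lt {y | lt y x})
    {B : Set T} (hB : IsMaxChain lt B) {y z : T} (hy : y ∈ B) (hz : lt z y) : z ∈ B := by
  have hins : IsChain lt (insert z B) := by
    refine hB.1.insert fun b hb hne => ?_
    rcases eq_or_ne b y with rfl | hby
    · exact Or.inl hz
    · rcases hB.1 hb hy hby with h | h
      · exact hchain y hz h hne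
      · exact Or.inl (htrans _ _ _ hz h)
  have hBeq := hB.2 hins (Set.subset_insert _ _)
  rw [hBeq]
  exact Set.mem_insert z B

lemma exists_high_rank (hwf : WellFounded lt) {B : Set T} (hBc : IsChain lt B)
    (hBu : ¬ B.Countable) {β : Ordinal} (hβ : β < (Cardinal.aleph 1).ord) :
    ∃ y ∈ B, β ≤ (hwf.apply y).rank := by
  by_contra h
  push_neg at h
  apply hBu
  rw [Cardinal.countable_iff_lt_aleph_one _]
  have hf : Function.Injective fun y : ↥B =>
      (Ordinal.ToType.mk (o := β)) ⟨(hwf.apply y.1).rank, h y.1 y.2⟩ := by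
    intro y y' hyy
    have heq : (hwf.apply y.1).rank = (hwf.apply y'.1).rank :=
      congrArg Subtype.val (((Ordinal.ToType.mk (o := β))).injective hyy)
    by_contra hne
    have hne' : y.1 ≠ y'.1 := fun hh => hne (Subtype.ext hh)
    rcases hBc y.2 y'.2 hne' with hl | hl
    · exact absurd heq (ne_of_lt ((hwf.apply _).rank_lt_of_rel hl))
    · exact absurd heq.symm (ne_of_lt ((hwf.apply _).rank_lt_of_rel hl))
  calc Cardinal.mk ↥B ≤ Cardinal.mk β.ToType := Cardinal.mk_le_of_injective hf
  _ = β.card := Cardinal.mk_toType β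
  _ < Cardinal.aleph 1 := Cardinal.lt_ord.1 hβ

end Tree

lemma forward : (∃ (T : Type) (lt : T → T → Prop), IsKurepaTree T lt) →
    ∃ F : Set (Set Omega1), IsKurepaFamily F := by
  rintro ⟨T, lt, htrans, hirr, hchain, hwf, hlt, hht, hlev, hbr⟩
  have hgex : ∀ β : Ordinal, ∃ g : {x : T // (hwf.apply x).rank = β} → ℕ, Function.Injective g := by
    intro β
    have : Countable ↥{x : T | (hwf.apply x).rank = β} := (hlev β).to_subtype
    exact (countable_iff_exists_injective _).1 this
  choose g hg using hgex
  have gaux : ∀ {β γ : Ordinal} (h : β = γ) (z : T) (hz : (hwf.apply z).rank = β),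
      g β ⟨z, hz⟩ = g γ ⟨z, hz.trans h⟩ := by rintro β γ rfl z hz; rfl
  set code : T → Ordinal := fun x => Ordinal.omega0 * (hwf.apply x).rank + g ((hwf.apply x).rank) ⟨x, rfl⟩
    with hcodedef
  have hcodelt : ∀ x, code x < (Cardinal.aleph 1).ord := fun x => code_lt (hlt x) _
  set e : T → Omega1 := fun x => iso ⟨code x, hcodelt x⟩ with hedef
  have einj : Function.Injective e := by
    intro x y hxy
    have h1 : code x = code y := congrArg Subtype.val (iso.injective hxy)
    obtain ⟨hr, hm⟩ := code_inj h1
    have hm2 : g ((hwf.apply x).rank) ⟨y, hr.symm⟩ = g ((hwf.apply x).rank) ⟨x, rfl⟩ := by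
      rw [gaux hr y hr.symm]; exact hm.symm
    exact (congrArg Subtype.val (hg _ hm2)).symm
  have esymm : ∀ y : T, ((iso.symm (e y) : Set.Iio (Cardinal.aleph 1).ord) : Ordinal) = code y :=
    fun y => by rw [hedef]; simp
  have elt : ∀ (y : T) (α : Omega1), e y < α ↔ code y < ell α := by
    intro y α
    have h2 : iso.symm (e y) < iso.symm α ↔ e y < α := iso.symm.lt_iff_lt
    rw [← h2, ← Subtype.coe_lt_coe, esymm y]
    exact Iff.rfl
  have hranklecode : ∀ y : T, (hwf.apply y).rank ≤ code y :=
    fun y => (Ordinal.le_mul_right _ Ordinal.omega0_pos).trans (le_add_right le_rfl)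
  refine ⟨Set.image e '' {B : Set T | IsMaxChain lt B ∧ ¬ B.Countable}, ?_, ?_⟩
  · rw [Cardinal.mk_image_eq (Set.image_injective.2 einj)]
    exact hbr
  · intro α
    have hδ : ell α < (Cardinal.aleph 1).ord := ell_lt α
    have key : ∀ A ∈ Set.image e '' {B : Set T | IsMaxChain lt B ∧ ¬ B.Countable},
        (A ∩ {v | v < α}) ∈
          (fun w => e '' {z | lt z w} ∩ {v | v < α}) '' {x : T | (hwf.apply x).rank = ell α} := by
      rintro A ⟨B, ⟨hBmax, hBunc⟩, rfl⟩
      obtain ⟨y, hyB, hy⟩ := exists_high_rank hwf hBmax.1 hBunc hδ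
      obtain ⟨x, hxB, hx⟩ : ∃ x ∈ B, (hwf.apply x).rank = ell α := by
        rcases hy.eq_or_lt with h | h
        · exact ⟨y, hyB, h.symm⟩
        · obtain ⟨z, hzy, hz⟩ := rank_surj_below htrans hwf y (ell α) h
          exact ⟨z, pred_mem_maxchain htrans hchain hBmax hyB hzy, hz⟩
      refine ⟨x, hx, ?_⟩
      ext v
      simp only [Set.mem_inter_iff, Set.mem_image, Set.mem_setOf_eq]
      constructor
      · rintro ⟨⟨z, hzx, rfl⟩, hvα⟩
        exact ⟨⟨z, pred_mem_maxchain htrans hchain hBmax hxB hzx, rfl⟩, hvα⟩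
      · rintro ⟨⟨z, hzB, rfl⟩, hvα⟩
        refine ⟨⟨z, ?_, rfl⟩, hvα⟩
        have hcz : code z < ell α := (elt z α).1 hvα
        have hrz : (hwf.apply z).rank < ell α := lt_of_le_of_lt (hranklecode z) hcz
        have hne : z ≠ x := by
          intro h
          rw [h, hx] at hrz
          exact lt_irrefl _ hrz
        rcases hBmax.1 hzB hxB hne with h | h
        · exact h
        · have := (hwf.apply _).rank_lt_of_rel h
          rw [hx] at this
          exact absurd hrz (asymm this)
    refine Set.Countable.mono ?_ ((hlev (ell α)).image (fun w => e '' {z | lt z w} ∩ {v | v < α}))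
    rintro s ⟨A, hA, rfl⟩
    exact key A hA

lemma backward : (∃ F : Set (Set Omega1), IsKurepaFamily F) →
    ∃ (T : Type) (lt : T → T → Prop), IsKurepaTree T lt := by
  rintro ⟨F, hF1, hF2⟩
  haveI : NoMaxOrder Omega1 := Cardinal.noMaxOrder (Cardinal.aleph0_le_aleph 1)
  have interlem : ∀ (s : Set Omega1) (β γ : Omega1), β ≤ γ →
      (s ∩ {v | v < γ}) ∩ {v | v < β} = s ∩ {v | v < β} := by
    intro s β γ h
    ext v
    simp only [Set.mem_inter_iff, Set.mem_setOf_eq]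
    constructor
    · rintro ⟨⟨hv1, _⟩, hv3⟩; exact ⟨hv1, hv3⟩
    · rintro ⟨hv1, hv2⟩; exact ⟨⟨hv1, lt_of_lt_of_le hv2 h⟩, hv2⟩
  have hFne : F.Nonempty := by
    rw [Set.nonempty_iff_ne_empty]
    rintro rfl
    have : Cardinal.aleph 2 ≤ 0 := by simpa using hF1
    exact (Cardinal.aleph_pos 2).not_ge this
  let T : Type := {p : Set Omega1 × Omega1 // ∃ A ∈ F, p.1 = A ∩ {v | v < p.2}}
  let lt : T → T → Prop := fun x y => x.1.2 < y.1.2 ∧ x.1.1 = y.1.1 ∩ {v | v < x.1.2}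
  have htrans : ∀ a b c : T, lt a b → lt b c → lt a c := by
    rintro a b c ⟨h1, h2⟩ ⟨h3, h4⟩
    refine ⟨h1.trans h3, ?_⟩
    show a.1.1 = c.1.1 ∩ {v | v < a.1.2}
    rw [h2, h4, Set.inter_assoc]
    congr 1
    ext v
    simp only [Set.mem_inter_iff, Set.mem_setOf_eq]
    exact ⟨fun hh => hh.2, fun hh => ⟨hh.trans h1, hh⟩⟩
  have hirr : ∀ a : T, ¬ lt a a := by
    rintro a ⟨h, _⟩
    exact lt_irrefl _ h
  have hchain : ∀ x : T, IsChain lt {y | lt y x} := by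
    intro x a ha b hb hne
    rcases lt_trichotomy a.1.2 b.1.2 with h | h | h
    · exact Or.inl ⟨h, by rw [ha.2, hb.2, interlem _ _ _ h.le]⟩
    · exfalso
      apply hne
      apply Subtype.ext
      apply Prod.ext
      · rw [ha.2, hb.2, h]
      · exact h
    · exact Or.inr ⟨h, by rw [ha.2, hb.2, interlem _ _ _ h.le]⟩
  have hwf : WellFounded lt :=
    Subrelation.wf (r := InvImage (· < ·) (fun x : T => x.1.2))
      (fun {x y} h => h.1) (InvImage.wf _ wellFounded_lt)
  -- rank computation
  have hrank : ∀ x : T, (hwf.apply x).rank = ell x.1.2 := by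
    intro x
    induction x using hwf.induction with
    | _ x IH =>
    rw [(hwf.apply x).rank_eq]
    apply le_antisymm
    · apply Ordinal.iSup_le
      rintro ⟨y, hy⟩
      rw [Order.succ_le_iff, IH y hy]
      exact ell_lt_ell.2 hy.1
    · apply le_of_forall_lt
      intro o ho
      have ho1 : o < (Cardinal.aleph 1).ord := ho.trans (ell_lt _)
      obtain ⟨γ, hγ⟩ := ell_surj ho1
      have hγx : γ < x.1.2 := ell_lt_ell.1 (by rw [hγ]; exact ho)
      obtain ⟨A, hA, hAx⟩ := x.2
      have hyP : ∃ A ∈ F, (x.1.1 ∩ {v | v < γ}, γ).1 = A ∩ {v | v < (x.1.1 ∩ {v | v < γ}, γ).2} :=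
        ⟨A, hA, by rw [hAx]; exact interlem A γ x.1.2 hγx.le⟩
      have hyx : lt ⟨(x.1.1 ∩ {v | v < γ}, γ), hyP⟩ x := ⟨hγx, rfl⟩
      calc o = ell γ := hγ.symm
      _ = (hwf.apply ⟨(x.1.1 ∩ {v | v < γ}, γ), hyP⟩).rank := (IH _ hyx).symm
      _ < Order.succ ((hwf.apply ⟨(x.1.1 ∩ {v | v < γ}, γ), hyP⟩).rank) := Order.lt_succ _
      _ ≤ _ := Ordinal.le_iSup _ (⟨⟨(x.1.1 ∩ {v | v < γ}, γ), hyP⟩, hyx⟩ : {y // lt y x})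
  -- the branches
  have hnodeP : ∀ (A : Set Omega1), A ∈ F → ∀ β : Omega1,
      ∃ B ∈ F, (A ∩ {v | v < β}, β).1 = B ∩ {v | v < (A ∩ {v | v < β}, β).2} :=
    fun A hA β => ⟨A, hA, rfl⟩
  let node : ↥F → Omega1 → T := fun A β => ⟨(A.1 ∩ {v | v < β}, β), hnodeP A.1 A.2 β⟩
  have hnode_inj : ∀ A : ↥F, Function.Injective (node A) :=
    fun A β γ h => congrArg (fun z : T => z.1.2) h
  have hbranch_chain : ∀ A : ↥F, IsChain lt (Set.range (node A)) := by
    rintro A _ ⟨β, rfl⟩ _ ⟨γ, rfl⟩ hne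
    rcases lt_trichotomy β γ with h | h | h
    · exact Or.inl ⟨h, (interlem A.1 β γ h.le).symm⟩
    · exact absurd (congrArg (node A) h) hne
    · exact Or.inr ⟨h, (interlem A.1 γ β h.le).symm⟩
  have hbranch_max : ∀ A : ↥F, IsMaxChain lt (Set.range (node A)) := by
    intro A
    refine ⟨hbranch_chain A, ?_⟩
    intro C hC hsub
    refine Set.Subset.antisymm hsub fun x hx => ?_
    obtain ⟨γ, hγ⟩ := exists_gt x.1.2
    have hnC : node A γ ∈ C := hsub (Set.mem_range_self γ)
    rcases eq_or_ne x (node A γ) with rfl | hne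
    · exact Set.mem_range_self γ
    · rcases hC hx hnC hne with h | h
      · refine ⟨x.1.2, ?_⟩
        apply Subtype.ext
        apply Prod.ext
        · show A.1 ∩ {v | v < x.1.2} = x.1.1
          rw [h.2]
          exact (interlem A.1 x.1.2 γ (le_of_lt hγ)).symm
        · rfl
      · exact absurd h.1 (asymm hγ)
  have hbranch_unc : ∀ A : ↥F, ¬ (Set.range (node A)).Countable := by
    intro A hc
    rw [Cardinal.countable_iff_lt_aleph_one _, Cardinal.mk_range_eq _ (hnode_inj A),
      mk_Omega1] at hc
    exact lt_irrefl _ hc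
  have hbranch_injective : ∀ A A' : ↥F, Set.range (node A) = Set.range (node A') → A = A' := by
    intro A A' h
    apply Subtype.ext
    ext v
    obtain ⟨β, hβ⟩ := exists_gt v
    have h1 : node A β ∈ Set.range (node A') := h ▸ Set.mem_range_self β
    obtain ⟨γ, hγ⟩ := h1
    have h2 : γ = β := congrArg (fun z : T => z.1.2) hγ
    subst h2
    have h3 : A'.1 ∩ {w | w < γ} = A.1 ∩ {w | w < γ} := congrArg (fun z : T => z.1.1) hγ
    constructor <;> intro hv
    · have hm : v ∈ A.1 ∩ {w | w < γ} := ⟨hv, hβ⟩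
      rw [← h3] at hm
      exact hm.1
    · have hm : v ∈ A'.1 ∩ {w | w < γ} := ⟨hv, hβ⟩
      rw [h3] at hm
      exact hm.1
  refine ⟨T, lt, htrans, hirr, hchain, hwf, ?_, ?_, ?_, ?_⟩
  · intro x
    rw [hrank]
    exact ell_lt _
  · intro o ho
    obtain ⟨β, hβ⟩ := ell_surj ho
    obtain ⟨A, hA⟩ := hFne
    exact ⟨⟨(A ∩ {v | v < β}, β), ⟨A, hA, rfl⟩⟩, by rw [hrank]; exact hβ⟩
  · intro o
    by_cases hex : ∃ β : Omega1, ell β = o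
    · obtain ⟨β, rfl⟩ := hex
      rw [← Set.countable_coe_iff]
      have htr : Countable ↥{s : Set Omega1 | ∃ A ∈ F, s = A ∩ {x | x < β}} :=
        (hF2 β).to_subtype
      have hmem : ∀ x : ↥{x : T | (hwf.apply x).rank = ell β},
          x.1.1.1 ∈ {s : Set Omega1 | ∃ A ∈ F, s = A ∩ {v | v < β}} := by
        rintro ⟨x, hx⟩
        have hx2 : x.1.2 = β := ell_inj (by rw [← hrank x]; exact hx)
        obtain ⟨A, hA, hAx⟩ := x.2
        exact ⟨A, hA, by rw [hAx, hx2]⟩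
      have hinj : Function.Injective
          (fun x : ↥{x : T | (hwf.apply x).rank = ell β} =>
            (⟨x.1.1.1, hmem x⟩ : ↥{s : Set Omega1 | ∃ A ∈ F, s = A ∩ {v | v < β}})) := by
        intro x y hxy
        have h1 : x.1.1.1 = y.1.1.1 := congrArg Subtype.val hxy
        have hx2 : x.1.1.2 = β := ell_inj (by rw [← hrank x.1]; exact x.2)
        have hy2 : y.1.1.2 = β := ell_inj (by rw [← hrank y.1]; exact y.2)
        apply Subtype.ext
        apply Subtype.ext
        apply Prod.ext
        · exact h1
        · rw [hx2, hy2]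
      exact hinj.countable
    · have hempty : {x : T | (hwf.apply x).rank = o} = ∅ := by
        ext x
        simp only [Set.mem_setOf_eq, Set.mem_empty_iff_false, iff_false]
        intro h
        exact hex ⟨x.1.2, by rw [← hrank x]; exact h⟩
      rw [hempty]
      exact Set.countable_empty
  · have hinj : Function.Injective (fun A : ↥F =>
        (⟨Set.range (node A), hbranch_max A, hbranch_unc A⟩ :
          ↥{B : Set T | IsMaxChain lt B ∧ ¬ B.Countable})) := by
      intro A A' h
      exact hbranch_injective A A' (congrArg Subtype.val h)
    exact hF1.trans (Cardinal.mk_le_of_injective hinj)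

end

end KurepaAux

theorem kurepa_tree_iff_kurepa_family :
    (∃ (T : Type) (lt : T → T → Prop), IsKurepaTree T lt) ↔
    (∃ F : Set (Set Omega1), IsKurepaFamily F) :=
  ⟨KurepaAux.forward, KurepaAux.backward⟩
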